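/- Let n = 2, let T₀ > 0, let (a_{αβ})_{α,β=1}^2 be a constant symmetric matrix with nonnegative entries, and let (x_α, u_α, T_α), α ∈ {1,2}, be a differentiable solution of the PB-CS model with T_α(t) > 0 for all α, t, satisfying u_1(t) + u_2(t) = 0 for all t. Then (d/dt) 𝒱(t)² ≤ 0 for all t. -/

import Mathlib

open scoped RealInnerProductSpace

theorem stmt17 (d : ℕ) (T₀ : ℝ) (hT₀ : 0 < T₀)
    (a : Fin 2 → Fin 2 → ℝ) (ha_symm : ∀ α β, a α β = a β α) (ha_nonneg : ∀ α β, 0 ≤ a α β)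
    (x u : Fin 2 → ℝ → EuclideanSpace ℝ (Fin d)) (T : Fin 2 → ℝ → ℝ)
    (hTpos : ∀ α t, 0 < T α t)
    (hx : ∀ α t, HasDerivAt (x α) (u α t) t)
    (hu : ∀ α t, HasDerivAt (u α)
      ((T₀ / (2 : ℝ)) • ∑ β, a α β • ((T β t)⁻¹ • u β t - (T α t)⁻¹ • u α t)) t)
    (hT : ∀ α t, HasDerivAt (fun s => T α s + ‖u α s‖ ^ 2 / 2)
      ((T₀ ^ 2 / (2 : ℝ)) * ∑ β, a α β * ((T α t)⁻¹ - (T β t)⁻¹)) t)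
    (hsum : ∀ t, u 0 t + u 1 t = 0) :
    ∀ t, deriv (fun s => ∑ α, ‖u α s‖ ^ 2) t ≤ 0 := by
  intro t
  set D : Fin 2 → EuclideanSpace ℝ (Fin d) := fun α =>
    (T₀ / (2 : ℝ)) • ∑ β, a α β • ((T β t)⁻¹ • u β t - (T α t)⁻¹ • u α t) with hD
  have hderiv : ∀ α, HasDerivAt (fun s => ‖u α s‖ ^ 2)
      (⟪u α t, D α⟫ + ⟪D α, u α t⟫) t := by
    intro α
    have h : HasDerivAt (fun s => ⟪u α s, u α s⟫)
        (⟪u α t, D α⟫ + ⟪D α, u α t⟫) t := (hu α t).inner ℝ (hu α t)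
    simp only [real_inner_self_eq_norm_sq] at h
    exact h
  have htot : HasDerivAt (fun s => ∑ α, ‖u α s‖ ^ 2)
      (∑ α, (⟪u α t, D α⟫ + ⟪D α, u α t⟫)) t :=
    HasDerivAt.fun_sum (fun α _ => hderiv α)
  rw [htot.deriv]
  have hv : u 1 t = - u 0 t := eq_neg_of_add_eq_zero_right (hsum t)
  have ha01 := ha_nonneg 0 1
  have hT0 := hTpos 0 t
  have hT1 := hTpos 1 t
  have hsymm := ha_symm 1 0
  simp only [hD, Fin.sum_univ_two, hv, inner_smul_right, inner_add_right, inner_sub_right,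
    inner_neg_right, inner_neg_neg, smul_neg, inner_smul_left, inner_add_left, inner_sub_left,
    inner_neg_left, real_inner_self_eq_norm_sq, hsymm, sub_self, smul_zero, starRingEnd_apply, star_trivial, norm_neg]
  have h1 : 0 < (T 0 t)⁻¹ := inv_pos.2 hT0
  have h2 : 0 < (T 1 t)⁻¹ := inv_pos.2 hT1
  nlinarith [mul_nonneg (mul_nonneg (mul_nonneg hT₀.le ha01) h1.le) (sq_nonneg ‖u 0 t‖), mul_nonneg (mul_nonneg (mul_nonneg hT₀.le ha01) h2.le) (sq_nonneg ‖u 0 t‖)]
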